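/- arXiv:1806.08733 — 7 statements merged into one kernel-verified Lean document; each statement's English description precedes it below -/
import Mathlib

section
/- Blackwell-dominance convex dominance inequality (core of Theorem 2): Let P be an X×X row-stochastic matrix, let B(2) be an X×Y row-stochastic matrix and L a Y×Y' row-stochastic matrix, and set B(1) = B(2)·L (an X×Y' row-stochastic matrix), so B(2) Blackwell-dominates B(1). Assume all entries of B(1) and B(2) are strictly positive. Then for every convex function V : Π(X) → ℝ and every belief π ∈ Π(X): Σ_{y=1}^{Y'} V(T₁(π,y))·σ₁(π,y) ≤ Σ_{y=1}^{Y} V(T₂(π,y))·σ₂(π,y), where σ_a(π,y) = Σ_j B(a)_{j,y}(Pᵀπ)_j and T_a(π,y)_j = B(a)_{j,y}(Pᵀπ)_j / σ_a(π,y) are the Bayes normalization and update under observation matrix B(a) (a ∈ {1,2}). -/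
open Finset

/-- Membership in the belief simplex Π(X). -/
def inSimplex {X : ℕ} (π : Fin X → ℝ) : Prop :=
  (∀ i, 0 ≤ π i) ∧ ∑ i, π i = 1

/-- A matrix is row-stochastic: nonnegative entries, rows summing to one. -/
def rowStochastic {n m : ℕ} (A : Matrix (Fin n) (Fin m) ℝ) : Prop :=
  (∀ i j, 0 ≤ A i j) ∧ ∀ i, ∑ j, A i j = 1

/-- Totally positive of order 2: all 2×2 minors nonnegative. -/
def TP2 {n m : ℕ} (A : Matrix (Fin n) (Fin m) ℝ) : Prop :=
  ∀ i i' : Fin n, ∀ y y' : Fin m, i < i' → y < y' →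
    A i y' * A i' y ≤ A i y * A i' y'

/-- Monotone likelihood ratio (MLR) order: `a ≤_r b`. -/
def MLRle {n : ℕ} (a b : Fin n → ℝ) : Prop :=
  ∀ i j : Fin n, i < j → a j * b i ≤ a i * b j

/-- The last index of `Fin n`. -/
def lastIdx (n : ℕ) [NeZero n] : Fin n :=
  ⟨n - 1, Nat.sub_lt (Nat.pos_of_ne_zero (NeZero.ne n)) Nat.one_pos⟩

/-- One-step predicted belief `Pᵀπ`. -/
noncomputable def bayesPred {X : ℕ} (P : Matrix (Fin X) (Fin X) ℝ) (π : Fin X → ℝ) : Fin X → ℝ :=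
  fun j => ∑ i, P i j * π i

/-- Normalization constant σ(π,y) = Σ_j B_{j,y} (Pᵀπ)_j. -/
noncomputable def obsMarg {X Y : ℕ} (B : Matrix (Fin X) (Fin Y) ℝ)
    (P : Matrix (Fin X) (Fin X) ℝ) (π : Fin X → ℝ) (y : Fin Y) : ℝ :=
  ∑ j, B j y * bayesPred P π j

/-- Bayes belief update T(π,y). -/
noncomputable def bayesT {X Y : ℕ} (B : Matrix (Fin X) (Fin Y) ℝ)
    (P : Matrix (Fin X) (Fin X) ℝ) (π : Fin X → ℝ) (y : Fin Y) : Fin X → ℝ :=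
  fun j => B j y * bayesPred P π j / obsMarg B P π y

/-- Value iteration: `V 0 ≡ 0`, `V (k+1) π = max_u [rᵤᵀπ + ρ Σ_y V k (T(π,y,u)) σ(π,y,u)]`. -/
noncomputable def VI {X Y U : ℕ} [NeZero U]
    (P : Fin U → Matrix (Fin X) (Fin X) ℝ)
    (B : Fin U → Matrix (Fin X) (Fin Y) ℝ)
    (r : Fin U → Fin X → ℝ) (ρ : ℝ) : ℕ → (Fin X → ℝ) → ℝ
  | 0 => fun _ => 0
  | (k+1) => fun π =>
      Finset.univ.sup' Finset.univ_nonempty fun u =>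
        (∑ i, r u i * π i) +
          ρ * ∑ y, VI P B r ρ k (bayesT (B u) (P u) π y) * obsMarg (B u) (P u) π y

/-- `Qfun P B r ρ k π u` is the value-iteration Q-function at horizon `k+1`,
i.e. `Q_{k+1}(π,u) = rᵤᵀπ + ρ Σ_y V_k(T(π,y,u)) σ(π,y,u)`. -/
noncomputable def Qfun {X Y U : ℕ} [NeZero U]
    (P : Fin U → Matrix (Fin X) (Fin X) ℝ)
    (B : Fin U → Matrix (Fin X) (Fin Y) ℝ)
    (r : Fin U → Fin X → ℝ) (ρ : ℝ) (k : ℕ) (π : Fin X → ℝ) (u : Fin U) : ℝ :=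
  (∑ i, r u i * π i) +
    ρ * ∑ y, VI P B r ρ k (bayesT (B u) (P u) π y) * obsMarg (B u) (P u) π y

/-- Lehmann precision of the pair `(A, C)` (i.e. `C >_L A`): for all columns `j, l`,
`g(i) = Σ_{y≤j} A i y − Σ_{y≤l} C i y` changes sign at most once,
from negative to positive, as the row `i` increases. -/
def LehmannPrec {X Y : ℕ} (A C : Matrix (Fin X) (Fin Y) ℝ) : Prop :=
  ∀ j l : Fin Y, ∀ i i' : Fin X, i ≤ i' →
    ((0 ≤ (∑ y ∈ univ.filter (· ≤ j), A i y) - ∑ y ∈ univ.filter (· ≤ l), C i y →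
      0 ≤ (∑ y ∈ univ.filter (· ≤ j), A i' y) - ∑ y ∈ univ.filter (· ≤ l), C i' y) ∧
     (0 < (∑ y ∈ univ.filter (· ≤ j), A i y) - ∑ y ∈ univ.filter (· ≤ l), C i y →
      0 < (∑ y ∈ univ.filter (· ≤ j), A i' y) - ∑ y ∈ univ.filter (· ≤ l), C i' y))

/-- Boundary/absolute-continuity condition (A7) for the pair `(A, C)` (C playing the role of
`B(u+1)`): `A_{i,1} C_{X,1} ≤ C_{i,1} A_{X,1}` and `A_{i,Y} C_{X,Y} ≥ C_{i,Y} A_{X,Y}`. -/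
def BoundaryCond {X Y : ℕ} [NeZero X] [NeZero Y] (A C : Matrix (Fin X) (Fin Y) ℝ) : Prop :=
  ∀ i : Fin X,
    A i 0 * C (lastIdx X) 0 ≤ C i 0 * A (lastIdx X) 0 ∧
    C i (lastIdx Y) * A (lastIdx X) (lastIdx Y) ≤ A i (lastIdx Y) * C (lastIdx X) (lastIdx Y)

/-- Copositive dominance `P1 ⪯ P2`. -/
def CopositiveDom {X : ℕ} (P1 P2 : Matrix (Fin X) (Fin X) ℝ) : Prop :=
  ∀ j j' : Fin X, j'.val = j.val + 1 → ∀ π : Fin X → ℝ, inSimplex π →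
    0 ≤ ∑ m, ∑ n, π m *
      ((1/2) * ((P1 m j * P2 n j' - P1 m j' * P2 n j) +
                (P1 n j * P2 m j' - P1 n j' * P2 m j))) * π n

/-- `u` is the largest maximizer of `f` over the action set. -/
def isLargestArgmax {U : ℕ} (f : Fin U → ℝ) (u : Fin U) : Prop :=
  (∀ v, f v ≤ f u) ∧ ∀ v, f u ≤ f v → v ≤ u
/-- Core of Theorem 2 (Blackwell dominance): if `B1 = B2 * L` with `L` row-stochastic
(so `B2` Blackwell-dominates `B1`) and both have strictly positive entries, then for any
convex `V` on the simplex, `Σ_y V(T₁(π,y)) σ₁(π,y) ≤ Σ_y V(T₂(π,y)) σ₂(π,y)`. -/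
theorem blackwell_convex_dominance
    (X Y Y' : ℕ)
    (P : Matrix (Fin X) (Fin X) ℝ) (hP : rowStochastic P)
    (B2 : Matrix (Fin X) (Fin Y) ℝ) (hB2 : rowStochastic B2)
    (L : Matrix (Fin Y) (Fin Y') ℝ) (hL : rowStochastic L)
    (B1 : Matrix (Fin X) (Fin Y') ℝ) (hB1def : B1 = B2 * L)
    (hB1pos : ∀ i y, 0 < B1 i y) (hB2pos : ∀ i y, 0 < B2 i y)
    (V : (Fin X → ℝ) → ℝ)
    (hV : ∀ ξ η : Fin X → ℝ, inSimplex ξ → inSimplex η → ∀ t : ℝ, 0 ≤ t → t ≤ 1 →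
      V (fun i => t * ξ i + (1 - t) * η i) ≤ t * V ξ + (1 - t) * V η)
    (π : Fin X → ℝ) (hπ : inSimplex π) :
    ∑ y, V (bayesT B1 P π y) * obsMarg B1 P π y ≤
      ∑ y, V (bayesT B2 P π y) * obsMarg B2 P π y := by
  classical
  set d := bayesPred P π with hd
  have hd0 : ∀ j, 0 ≤ d j := fun j =>
    Finset.sum_nonneg fun i _ => mul_nonneg (hP.1 i j) (hπ.1 i)
  have hd1 : ∑ j, d j = 1 := by
    rw [hd]
    unfold bayesPred
    rw [Finset.sum_comm]
    calc ∑ i, ∑ j, P i j * π i = ∑ i, (∑ j, P i j) * π i := by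
            simp [Finset.sum_mul]
      _ = ∑ i, π i := by simp [hP.2]
      _ = 1 := hπ.2
  have hσ2pos : ∀ y : Fin Y, 0 < obsMarg B2 P π y := by
    intro y
    obtain ⟨j, _, hj⟩ := Finset.exists_lt_of_sum_lt
      (show ∑ j, (0:ℝ) < ∑ j, d j by simp [hd1])
    exact Finset.sum_pos'
      (fun j _ => mul_nonneg (hB2pos j y).le (hd0 j))
      ⟨j, Finset.mem_univ j, mul_pos (hB2pos j y) hj⟩
  have hσ1pos : ∀ y : Fin Y', 0 < obsMarg B1 P π y := by
    intro y
    obtain ⟨j, _, hj⟩ := Finset.exists_lt_of_sum_lt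
      (show ∑ j, (0:ℝ) < ∑ j, d j by simp [hd1])
    exact Finset.sum_pos'
      (fun j _ => mul_nonneg (hB1pos j y).le (hd0 j))
      ⟨j, Finset.mem_univ j, mul_pos (hB1pos j y) hj⟩
  have hT2simplex : ∀ y : Fin Y, inSimplex (bayesT B2 P π y) := by
    intro y
    constructor
    · intro j
      exact div_nonneg (mul_nonneg (hB2pos j y).le (hd0 j)) (hσ2pos y).le
    · unfold bayesT
      rw [← Finset.sum_div]
      exact div_self (hσ2pos y).ne'
  -- convexity of V on the standard simplex
  have hconv : ConvexOn ℝ {p : Fin X → ℝ | inSimplex p} V := by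
    constructor
    · have : {p : Fin X → ℝ | inSimplex p} = stdSimplex ℝ (Fin X) := by
        ext p; rfl
      rw [this]
      exact convex_stdSimplex ℝ (Fin X)
    · intro ξ hξ η hη a b ha hb hab
      have hb' : b = 1 - a := by linarith
      subst hb'
      have h := hV ξ η hξ hη a ha (by linarith)
      have heq : (a • ξ + (1 - a) • η) = fun i => a * ξ i + (1 - a) * η i := by
        funext i
        simp [smul_eq_mul]
      rw [heq]
      exact h
  -- key identity for σ₁
  have hσ : ∀ y' : Fin Y', obsMarg B1 P π y' = ∑ y, obsMarg B2 P π y * L y y' := by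
    intro y'
    unfold obsMarg
    subst hB1def
    simp only [Matrix.mul_apply, Finset.sum_mul]
    rw [Finset.sum_comm]
    apply Finset.sum_congr rfl
    intro y _
    apply Finset.sum_congr rfl
    intro x _
    ring
  -- key identity for T₁ as convex combination
  have hT : ∀ y' : Fin Y',
      bayesT B1 P π y' =
        ∑ y, (obsMarg B2 P π y * L y y' / obsMarg B1 P π y') • bayesT B2 P π y := by
    intro y'
    funext j
    simp only [Finset.sum_apply, Pi.smul_apply, smul_eq_mul]
    unfold bayesT
    have h1 := (hσ1pos y').ne'
    have : ∀ y : Fin Y,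
        obsMarg B2 P π y * L y y' / obsMarg B1 P π y' *
          (B2 j y * d j / obsMarg B2 P π y) =
        B2 j y * L y y' * d j / obsMarg B1 P π y' := by
      intro y
      have h2 := (hσ2pos y).ne'
      field_simp
    rw [Finset.sum_congr rfl fun y _ => this y]
    rw [← Finset.sum_div]
    congr 1
    subst hB1def
    rw [Matrix.mul_apply, Finset.sum_mul]
  -- weights sum to one
  have hwsum : ∀ y' : Fin Y',
      ∑ y, obsMarg B2 P π y * L y y' / obsMarg B1 P π y' = 1 := by
    intro y'
    rw [← Finset.sum_div, ← hσ y']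
    exact div_self (hσ1pos y').ne'
  have hw0 : ∀ (y' : Fin Y') (y : Fin Y),
      0 ≤ obsMarg B2 P π y * L y y' / obsMarg B1 P π y' := fun y' y =>
    div_nonneg (mul_nonneg (hσ2pos y).le (hL.1 y y')) (hσ1pos y').le
  -- Jensen per observation y'
  have hjensen : ∀ y' : Fin Y',
      V (bayesT B1 P π y') ≤
        ∑ y, (obsMarg B2 P π y * L y y' / obsMarg B1 P π y') * V (bayesT B2 P π y) := by
    intro y'
    rw [hT y']
    exact hconv.map_sum_le (fun y _ => hw0 y' y) (hwsum y')
      (fun y _ => hT2simplex y)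
  calc ∑ y', V (bayesT B1 P π y') * obsMarg B1 P π y'
      ≤ ∑ y', (∑ y, (obsMarg B2 P π y * L y y' / obsMarg B1 P π y') *
          V (bayesT B2 P π y)) * obsMarg B1 P π y' := by
        apply Finset.sum_le_sum
        intro y' _
        exact mul_le_mul_of_nonneg_right (hjensen y') (hσ1pos y').le
    _ = ∑ y', ∑ y, obsMarg B2 P π y * L y y' * V (bayesT B2 P π y) := by
        apply Finset.sum_congr rfl
        intro y' _
        rw [Finset.sum_mul]
        apply Finset.sum_congr rfl
        intro y _
        have h1 := (hσ1pos y').ne'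
        field_simp
    _ = ∑ y, V (bayesT B2 P π y) * obsMarg B2 P π y := by
        rw [Finset.sum_comm]
        apply Finset.sum_congr rfl
        intro y _
        have hstep : ∑ y', obsMarg B2 P π y * L y y' * V (bayesT B2 P π y)
            = (obsMarg B2 P π y * V (bayesT B2 P π y)) * ∑ y', L y y' := by
          rw [Finset.mul_sum]
          apply Finset.sum_congr rfl
          intro y' _
          ring
        rw [hstep, hL.2 y]
        ring
end

section
/- Blackwell-dominance comparison of optimal rewards of two POMDPs (Theorem 3, statement 2), finite-horizon form: Consider two finite POMDPs θ = (P(1..U), B(1),...,B(U)) and θ̄ = (P(1..U), B̄(1),...,B̄(U)) sharing the same row-stochastic transition matrices P(u), the same reward vectors r_u, and the same discount ρ ∈ [0,1), where all B(u), B̄(u) are row-stochastic with strictly positive entries. Assume Blackwell dominance B(u) >_B B̄(u) for every u: there exist row-stochastic matrices L_u with B̄(u) = B(u)·L_u. Then the value-iteration value functions satisfy V_k^θ(π) ≥ V_k^θ̄(π) for every k ≥ 0 and every π ∈ Π(X). -/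
open Finset

/-- Unnormalized value iteration. -/
noncomputable def Wfun {X Y U : ℕ} [NeZero U]
    (P : Fin U → Matrix (Fin X) (Fin X) ℝ)
    (B : Fin U → Matrix (Fin X) (Fin Y) ℝ)
    (r : Fin U → Fin X → ℝ) (ρ : ℝ) : ℕ → (Fin X → ℝ) → ℝ
  | 0 => fun _ => 0
  | (k+1) => fun x =>
      Finset.univ.sup' Finset.univ_nonempty fun u =>
        (∑ i, r u i * x i) +
          ρ * ∑ y, Wfun P B r ρ k (fun j => B u j y * bayesPred (P u) x j)

lemma mul_sup'_real {U : ℕ} [NeZero U] {c : ℝ} (hc : 0 ≤ c) (f : Fin U → ℝ) :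
    c * Finset.univ.sup' Finset.univ_nonempty f
      = Finset.univ.sup' Finset.univ_nonempty fun u => c * f u := by
  rw [Finset.comp_sup'_eq_sup'_comp Finset.univ_nonempty (fun t => c * t)
      (fun a b => mul_max_of_nonneg a b hc)]
  rfl

lemma bayesPred_nonneg {X : ℕ} {P : Matrix (Fin X) (Fin X) ℝ} (hP : rowStochastic P)
    {x : Fin X → ℝ} (hx : ∀ i, 0 ≤ x i) (j : Fin X) : 0 ≤ bayesPred P x j :=
  Finset.sum_nonneg fun i _ => mul_nonneg (hP.1 i j) (hx i)

lemma obsMarg_pos {X Y : ℕ} {B : Matrix (Fin X) (Fin Y) ℝ} {P : Matrix (Fin X) (Fin X) ℝ}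
    (hP : rowStochastic P) (hB : ∀ i y, 0 < B i y) {x : Fin X → ℝ}
    (hx : ∀ i, 0 ≤ x i) (hxs : 0 < ∑ i, x i) (y : Fin Y) :
    0 < obsMarg B P x y := by
  have hpred : ∀ j, 0 ≤ bayesPred P x j := bayesPred_nonneg hP hx
  have hsum : ∑ j, bayesPred P x j = ∑ i, x i := by
    unfold bayesPred
    rw [Finset.sum_comm]
    simp_rw [← Finset.sum_mul, hP.2, one_mul]
  obtain ⟨j, hj⟩ : ∃ j, 0 < bayesPred P x j := by
    by_contra h
    push_neg at h
    have : ∑ j, bayesPred P x j ≤ 0 := Finset.sum_nonpos fun j _ => h j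
    rw [hsum] at this; linarith
  exact Finset.sum_pos' (fun j _ => mul_nonneg (hB j y).le (hpred j))
    ⟨j, Finset.mem_univ j, mul_pos (hB j y) hj⟩

lemma inSimplex_normalize {X : ℕ} {x : Fin X → ℝ} (hx : ∀ i, 0 ≤ x i)
    (hs : 0 < ∑ i, x i) : inSimplex (fun i => x i / ∑ i, x i) :=
  ⟨fun i => div_nonneg (hx i) hs.le, by rw [← Finset.sum_div]; exact div_self hs.ne'⟩

/-- `Wfun` is the homogeneous extension of `VI` to the nonnegative cone. -/
lemma Wfun_eq {X Y U : ℕ} [NeZero U]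
    {P : Fin U → Matrix (Fin X) (Fin X) ℝ} (hPrs : ∀ u, rowStochastic (P u))
    {B : Fin U → Matrix (Fin X) (Fin Y) ℝ} (hBpos : ∀ u i y, 0 < B u i y)
    (r : Fin U → Fin X → ℝ) (ρ : ℝ) :
    ∀ k : ℕ, ∀ x : Fin X → ℝ, (∀ i, 0 ≤ x i) → 0 < ∑ i, x i →
      Wfun P B r ρ k x = (∑ i, x i) * VI P B r ρ k (fun i => x i / ∑ i, x i) := by
  intro k
  induction k with
  | zero => intro x hx hs; simp [Wfun, VI]
  | succ k ih =>
    intro x hx hs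
    have hsne : (∑ i, x i) ≠ 0 := hs.ne'
    simp only [Wfun, VI]
    rw [mul_sup'_real hs.le]
    refine Finset.sup'_congr Finset.univ_nonempty rfl fun u _ => ?_
    have hpredn : ∀ j, 0 ≤ bayesPred (P u) x j := bayesPred_nonneg (hPrs u) hx
    have hMn : ∀ y j, 0 ≤ B u j y * bayesPred (P u) x j :=
      fun y j => mul_nonneg (hBpos u j y).le (hpredn j)
    have hMs : ∀ y : Fin Y, 0 < ∑ j, B u j y * bayesPred (P u) x j :=
      fun y => obsMarg_pos (hPrs u) (hBpos u) hx hs y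
    have hob : ∀ y, obsMarg (B u) (P u) x y = ∑ j, B u j y * bayesPred (P u) x j :=
      fun y => rfl
    have hpredscale : ∀ j, bayesPred (P u) (fun i => x i / ∑ i, x i) j
        = bayesPred (P u) x j / ∑ i, x i := by
      intro j; unfold bayesPred
      rw [Finset.sum_div]
      exact Finset.sum_congr rfl fun i _ => by ring
    have hσ : ∀ y, obsMarg (B u) (P u) (fun i => x i / ∑ i, x i) y
        = (∑ j, B u j y * bayesPred (P u) x j) / ∑ i, x i := by
      intro y; unfold obsMarg
      rw [Finset.sum_div]
      exact Finset.sum_congr rfl fun j _ => by rw [hpredscale j]; ring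
    have hT : ∀ y, bayesT (B u) (P u) (fun i => x i / ∑ i, x i) y
        = fun j => (B u j y * bayesPred (P u) x j) / ∑ j, B u j y * bayesPred (P u) x j := by
      intro y; funext j
      unfold bayesT
      rw [hpredscale j, hσ y]
      have h1 : (∑ j, B u j y * bayesPred (P u) x j) ≠ 0 := (hMs y).ne'
      field_simp
    have hterm : ∀ y, VI P B r ρ k (bayesT (B u) (P u) (fun i => x i / ∑ i, x i) y)
          * obsMarg (B u) (P u) (fun i => x i / ∑ i, x i) y
        = Wfun P B r ρ k (fun j => B u j y * bayesPred (P u) x j) / ∑ i, x i := by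
      intro y
      rw [hT y, hσ y, ih (fun j => B u j y * bayesPred (P u) x j) (hMn y) (hMs y)]
      ring
    have hsum2 : (∑ y, VI P B r ρ k (bayesT (B u) (P u) (fun i => x i / ∑ i, x i) y)
          * obsMarg (B u) (P u) (fun i => x i / ∑ i, x i) y)
        = (∑ y, Wfun P B r ρ k (fun j => B u j y * bayesPred (P u) x j)) / ∑ i, x i := by
      rw [Finset.sum_div]
      exact Finset.sum_congr rfl fun y _ => hterm y
    have hr : (∑ i, r u i * (x i / ∑ i, x i)) = (∑ i, r u i * x i) / ∑ i, x i := by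
      rw [Finset.sum_div]
      exact Finset.sum_congr rfl fun i _ => by ring
    rw [hsum2, hr]
    field_simp

/-- Sublinearity of `Wfun` with respect to nonnegative combinations. -/
lemma Wfun_subadd {X Y U : ℕ} [NeZero U]
    (P : Fin U → Matrix (Fin X) (Fin X) ℝ)
    (B : Fin U → Matrix (Fin X) (Fin Y) ℝ)
    (r : Fin U → Fin X → ℝ) {ρ : ℝ} (hρ0 : 0 ≤ ρ)
    {c : Fin Y → ℝ} (hc : ∀ y, 0 ≤ c y) :
    ∀ k : ℕ, ∀ x : Fin Y → Fin X → ℝ,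
      Wfun P B r ρ k (fun j => ∑ y', c y' * x y' j)
        ≤ ∑ y', c y' * Wfun P B r ρ k (x y') := by
  intro k
  induction k with
  | zero => intro x; simp [Wfun]
  | succ k ih =>
    intro x
    simp only [Wfun]
    apply Finset.sup'_le
    intro u _
    have hpredlin : ∀ j, bayesPred (P u) (fun i => ∑ y', c y' * x y' i) j
        = ∑ y', c y' * bayesPred (P u) (x y') j := by
      intro j
      simp only [bayesPred, Finset.mul_sum]
      rw [Finset.sum_comm]
      exact Finset.sum_congr rfl fun y' _ => Finset.sum_congr rfl fun i _ => by ring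
    have hM : ∀ y : Fin Y,
        (fun j => B u j y * bayesPred (P u) (fun i => ∑ y', c y' * x y' i) j)
          = fun j => ∑ y', c y' * (B u j y * bayesPred (P u) (x y') j) := by
      intro y; funext j
      rw [hpredlin j, Finset.mul_sum]
      exact Finset.sum_congr rfl fun y' _ => by ring
    have h1 : (∑ i, r u i * ∑ y', c y' * x y' i) = ∑ y', c y' * ∑ i, r u i * x y' i := by
      simp only [Finset.mul_sum]
      rw [Finset.sum_comm]
      exact Finset.sum_congr rfl fun y' _ => Finset.sum_congr rfl fun i _ => by ring
    have h2 : ∀ y : Fin Y,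
        Wfun P B r ρ k (fun j => B u j y * bayesPred (P u) (fun i => ∑ y', c y' * x y' i) j)
          ≤ ∑ y', c y' * Wfun P B r ρ k (fun j => B u j y * bayesPred (P u) (x y') j) := by
      intro y
      rw [hM y]
      exact ih (fun y' => fun j => B u j y * bayesPred (P u) (x y') j)
    calc (∑ i, r u i * ∑ y', c y' * x y' i)
          + ρ * ∑ y, Wfun P B r ρ k
              (fun j => B u j y * bayesPred (P u) (fun i => ∑ y', c y' * x y' i) j)
        ≤ (∑ y', c y' * ∑ i, r u i * x y' i)
          + ρ * ∑ y, ∑ y', c y' * Wfun P B r ρ k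
              (fun j => B u j y * bayesPred (P u) (x y') j) := by
          rw [h1]
          exact add_le_add_right (mul_le_mul_of_nonneg_left
            (Finset.sum_le_sum fun y _ => h2 y) hρ0) _
      _ = ∑ y', c y' * ((∑ i, r u i * x y' i)
            + ρ * ∑ y, Wfun P B r ρ k (fun j => B u j y * bayesPred (P u) (x y') j)) := by
          have h3 : ρ * (∑ y, ∑ y', c y' * Wfun P B r ρ k
                (fun j => B u j y * bayesPred (P u) (x y') j))
              = ∑ y', c y' * (ρ * ∑ y, Wfun P B r ρ k
                (fun j => B u j y * bayesPred (P u) (x y') j)) := by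
            rw [Finset.sum_comm, Finset.mul_sum]
            exact Finset.sum_congr rfl fun y' _ => by
              rw [Finset.mul_sum, Finset.mul_sum, Finset.mul_sum]
              exact Finset.sum_congr rfl fun y _ => by ring
          rw [h3, ← Finset.sum_add_distrib]
          exact Finset.sum_congr rfl fun y' _ => by ring
      _ ≤ ∑ y', c y' * Finset.univ.sup' Finset.univ_nonempty (fun v =>
            (∑ i, r v i * x y' i)
              + ρ * ∑ y, Wfun P B r ρ k (fun j => B v j y * bayesPred (P v) (x y') j)) := by
          refine Finset.sum_le_sum fun y' _ => mul_le_mul_of_nonneg_left ?_ (hc y')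
          exact Finset.le_sup' (fun v => (∑ i, r v i * x y' i)
            + ρ * ∑ y, Wfun P B r ρ k (fun j => B v j y * bayesPred (P v) (x y') j))
            (Finset.mem_univ u)

/-- Theorem 3 (statement 2), finite-horizon: comparing two POMDPs with the same transition
matrices `P(u)`, rewards and discount, where `B(u)` Blackwell-dominates `B̄(u)`
(`B̄(u) = B(u) · L_u` with `L_u` row-stochastic) for every `u`; then `V_k^θ̄ ≤ V_k^θ`. -/
theorem blackwell_value_comparison
    (X Y U : ℕ) [NeZero U]
    (P : Fin U → Matrix (Fin X) (Fin X) ℝ) (hPrs : ∀ u, rowStochastic (P u))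
    (B Bb : Fin U → Matrix (Fin X) (Fin Y) ℝ)
    (hBrs : ∀ u, rowStochastic (B u)) (hBbrs : ∀ u, rowStochastic (Bb u))
    (hBpos : ∀ u i y, 0 < B u i y) (hBbpos : ∀ u i y, 0 < Bb u i y)
    (r : Fin U → Fin X → ℝ) (ρ : ℝ) (hρ0 : 0 ≤ ρ) (hρ1 : ρ < 1)
    (hBlackwell : ∀ u, ∃ L : Matrix (Fin Y) (Fin Y) ℝ, rowStochastic L ∧ Bb u = B u * L) :
    ∀ k : ℕ, ∀ π : Fin X → ℝ, inSimplex π →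
      VI P Bb r ρ k π ≤ VI P B r ρ k π := by
  intro k
  induction k with
  | zero => intro π hπ; simp [VI]
  | succ k ih =>
    intro π hπ
    simp only [VI]
    apply Finset.sup'_le
    intro u _
    refine le_trans ?_ (Finset.le_sup' _ (Finset.mem_univ u))
    refine add_le_add_right (mul_le_mul_of_nonneg_left ?_ hρ0) _
    -- key inequality on the expected continuation values
    obtain ⟨L, hLrs, hBL⟩ := hBlackwell u
    have hπs : 0 < ∑ i, π i := by rw [hπ.2]; norm_num
    have hpredn : ∀ j, 0 ≤ bayesPred (P u) π j := bayesPred_nonneg (hPrs u) hπ.1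
    have hMbn : ∀ y j, 0 ≤ Bb u j y * bayesPred (P u) π j :=
      fun y j => mul_nonneg (hBbpos u j y).le (hpredn j)
    have hMn : ∀ y j, 0 ≤ B u j y * bayesPred (P u) π j :=
      fun y j => mul_nonneg (hBpos u j y).le (hpredn j)
    have hMbs : ∀ y : Fin Y, 0 < ∑ j, Bb u j y * bayesPred (P u) π j :=
      fun y => obsMarg_pos (hPrs u) (hBbpos u) hπ.1 hπs y
    have hMs : ∀ y : Fin Y, 0 < ∑ j, B u j y * bayesPred (P u) π j :=
      fun y => obsMarg_pos (hPrs u) (hBpos u) hπ.1 hπs y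
    have hTb : ∀ y, inSimplex (bayesT (Bb u) (P u) π y) :=
      fun y => inSimplex_normalize (hMbn y) (hMbs y)
    have hσbnn : ∀ y : Fin Y, 0 ≤ obsMarg (Bb u) (P u) π y := fun y => (hMbs y).le
    calc (∑ y, VI P Bb r ρ k (bayesT (Bb u) (P u) π y) * obsMarg (Bb u) (P u) π y)
        ≤ ∑ y, VI P B r ρ k (bayesT (Bb u) (P u) π y) * obsMarg (Bb u) (P u) π y :=
          Finset.sum_le_sum fun y _ =>
            mul_le_mul_of_nonneg_right (ih _ (hTb y)) (hσbnn y)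
      _ = ∑ y, Wfun P B r ρ k (fun j => Bb u j y * bayesPred (P u) π j) := by
          refine Finset.sum_congr rfl fun y _ => ?_
          rw [Wfun_eq hPrs hBpos r ρ k (fun j => Bb u j y * bayesPred (P u) π j)
            (hMbn y) (hMbs y)]
          rw [show bayesT (Bb u) (P u) π y
              = fun i => (Bb u i y * bayesPred (P u) π i)
                  / ∑ i, Bb u i y * bayesPred (P u) π i from rfl,
            show obsMarg (Bb u) (P u) π y = ∑ i, Bb u i y * bayesPred (P u) π i from rfl,
            mul_comm]
      _ ≤ ∑ y, ∑ y', L y' y * Wfun P B r ρ k (fun j => B u j y' * bayesPred (P u) π j) := by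
          refine Finset.sum_le_sum fun y _ => ?_
          have hcomb : (fun j => Bb u j y * bayesPred (P u) π j)
              = fun j => ∑ y', L y' y * (B u j y' * bayesPred (P u) π j) := by
            funext j
            rw [hBL, Matrix.mul_apply, Finset.sum_mul]
            exact Finset.sum_congr rfl fun y' _ => by ring
          rw [hcomb]
          exact Wfun_subadd P B r hρ0 (fun y' => (hLrs.1 y' y)) k
            (fun y' => fun j => B u j y' * bayesPred (P u) π j)
      _ = ∑ y', Wfun P B r ρ k (fun j => B u j y' * bayesPred (P u) π j) := by
          rw [Finset.sum_comm]
          refine Finset.sum_congr rfl fun y' _ => ?_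
          rw [← Finset.sum_mul, hLrs.2, one_mul]
      _ = ∑ y, VI P B r ρ k (bayesT (B u) (P u) π y) * obsMarg (B u) (P u) π y := by
          refine Finset.sum_congr rfl fun y _ => ?_
          rw [Wfun_eq hPrs hBpos r ρ k (fun j => B u j y * bayesPred (P u) π j)
            (hMn y) (hMs y)]
          rw [show bayesT (B u) (P u) π y
              = fun i => (B u i y * bayesPred (P u) π i)
                  / ∑ i, B u i y * bayesPred (P u) π i from rfl,
            show obsMarg (B u) (P u) π y = ∑ i, B u i y * bayesPred (P u) π i from rfl,
            mul_comm]
end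

section
/- Piecewise linearity and convexity of the value function (Theorem 4, statement 2(a); Sondik): For any finite POMDP with row-stochastic transition matrices P(u), row-stochastic observation matrices B(u), reward vectors r_u, and discount ρ ∈ [0,1), and for every k ≥ 0, there exists a finite nonempty set Γ_k of vectors in ℝ^X such that the value-iteration value function satisfies V_k(π) = max_{γ ∈ Γ_k} γᵀπ for all π ∈ Π(X). In particular, each V_k is convex and piecewise linear on the belief simplex Π(X). -/
open Finset

lemma sup'_const_mul {α : Type*} (s : Finset α) (h : s.Nonempty) (c : ℝ) (hc : 0 ≤ c)
    (f : α → ℝ) : s.sup' h (fun x => c * f x) = c * s.sup' h f := by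
  apply le_antisymm
  · apply Finset.sup'_le
    intro x hx
    exact mul_le_mul_of_nonneg_left (Finset.le_sup' f hx) hc
  · obtain ⟨x, hx, hex⟩ := Finset.exists_mem_eq_sup' h f
    rw [hex]
    exact Finset.le_sup' (fun x => c * f x) hx

lemma sup'_const_add {α : Type*} (s : Finset α) (h : s.Nonempty) (c : ℝ)
    (f : α → ℝ) : s.sup' h (fun x => c + f x) = c + s.sup' h f := by
  apply le_antisymm
  · apply Finset.sup'_le
    intro x hx
    exact add_le_add_right (Finset.le_sup' f hx) c
  · obtain ⟨x, hx, hex⟩ := Finset.exists_mem_eq_sup' h f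
    rw [hex]
    exact Finset.le_sup' (fun x => c + f x) hx

lemma sum_sup'_eq {α : Type*} [DecidableEq α] {Y : ℕ} (Γ : Finset α) (hΓ : Γ.Nonempty)
    (g : Fin Y → α → ℝ) :
    ∑ y, Γ.sup' hΓ (g y) =
      (Fintype.piFinset fun _ : Fin Y => Γ).sup'
        (Fintype.piFinset_nonempty.mpr fun _ => hΓ) (fun f => ∑ y, g y (f y)) := by
  apply le_antisymm
  · choose w hw he using fun y => Finset.exists_mem_eq_sup' hΓ (g y)
    have hwmem : w ∈ Fintype.piFinset fun _ : Fin Y => Γ :=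
      Fintype.mem_piFinset.mpr hw
    calc ∑ y, Γ.sup' hΓ (g y) = ∑ y, g y (w y) := by
          exact Finset.sum_congr rfl fun y _ => he y
      _ ≤ _ := Finset.le_sup' (fun f => ∑ y, g y (f y)) hwmem
  · apply Finset.sup'_le
    intro f hf
    apply Finset.sum_le_sum
    intro y _
    exact Finset.le_sup' (g y) (Fintype.mem_piFinset.mp hf y)

/-- Theorem 4 (statement 2(a); Sondik): for any finite POMDP, each value-iteration value
function `V_k` is a finite maximum of linear functions on the belief simplex;
in particular it is piecewise linear and convex. -/
theorem value_function_piecewise_linear_convex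
    (X Y U : ℕ) [NeZero U]
    (P : Fin U → Matrix (Fin X) (Fin X) ℝ) (hPrs : ∀ u, rowStochastic (P u))
    (B : Fin U → Matrix (Fin X) (Fin Y) ℝ) (hBrs : ∀ u, rowStochastic (B u))
    (r : Fin U → Fin X → ℝ) (ρ : ℝ) (hρ0 : 0 ≤ ρ) (hρ1 : ρ < 1) :
    ∀ k : ℕ, ∃ Γ : Finset (Fin X → ℝ), ∃ hΓ : Γ.Nonempty,
      ∀ π : Fin X → ℝ, inSimplex π →
        VI P B r ρ k π = Γ.sup' hΓ (fun γ => ∑ i, γ i * π i) := by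
  intro k
  induction k with
  | zero =>
      refine ⟨{fun _ => 0}, Finset.singleton_nonempty _, fun π _ => ?_⟩
      simp [VI]
  | succ k ih =>
      obtain ⟨Γ, hΓ, hV⟩ := ih
      classical
      have hSne : ((univ : Finset (Fin U)) ×ˢ (Fintype.piFinset fun _ : Fin Y => Γ)).Nonempty :=
        Finset.Nonempty.product Finset.univ_nonempty (Fintype.piFinset_nonempty.mpr fun _ => hΓ)
      refine ⟨((univ : Finset (Fin U)) ×ˢ (Fintype.piFinset fun _ : Fin Y => Γ)).image (fun p => fun i =>
          r p.1 i + ρ * ∑ y, ∑ j, p.2 y j * (B p.1 j y * P p.1 i j)),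
        hSne.image _, fun π hπ => ?_⟩
      -- predicted belief is nonnegative
      have hpred : ∀ u j, 0 ≤ bayesPred (P u) π j := by
        intro u j
        apply Finset.sum_nonneg
        intro i _
        exact mul_nonneg ((hPrs u).1 i j) (hπ.1 i)
      have hσ : ∀ u y, 0 ≤ obsMarg (B u) (P u) π y := by
        intro u y
        apply Finset.sum_nonneg
        intro j _
        exact mul_nonneg ((hBrs u).1 j y) (hpred u j)
      -- key: V_k(T(π,y,u)) * σ(π,y,u) = sup over Γ of linear functional
      have key : ∀ u y,
          VI P B r ρ k (bayesT (B u) (P u) π y) * obsMarg (B u) (P u) π y =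
          Γ.sup' hΓ (fun γ => ∑ j, γ j * (B u j y * bayesPred (P u) π j)) := by
        intro u y
        rcases eq_or_lt_of_le (hσ u y) with hzero | hpos
        · have hterm : ∀ j, B u j y * bayesPred (P u) π j = 0 := by
            intro j
            have := (Finset.sum_eq_zero_iff_of_nonneg
              (fun j _ => mul_nonneg ((hBrs u).1 j y) (hpred u j))).mp hzero.symm
            exact this j (Finset.mem_univ j)
          rw [← hzero]
          simp only [mul_zero]
          symm
          have : (fun γ : Fin X → ℝ => ∑ j, γ j * (B u j y * bayesPred (P u) π j))
              = fun _ => (0:ℝ) := by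
            funext γ
            simp [hterm]
          rw [this]
          exact Finset.sup'_const hΓ 0
        · have hne : obsMarg (B u) (P u) π y ≠ 0 := ne_of_gt hpos
          have hTsimp : inSimplex (bayesT (B u) (P u) π y) := by
            constructor
            · intro j
              exact div_nonneg (mul_nonneg ((hBrs u).1 j y) (hpred u j)) (le_of_lt hpos)
            · unfold bayesT
              rw [← Finset.sum_div]
              exact div_self hne
          rw [hV _ hTsimp, mul_comm, ← sup'_const_mul Γ hΓ _ (le_of_lt hpos)]
          apply Finset.sup'_congr hΓ rfl
          intro γ _
          rw [Finset.mul_sum]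
          apply Finset.sum_congr rfl
          intro j _
          unfold bayesT
          field_simp
      -- rewrite VI (k+1)
      show (Finset.univ.sup' Finset.univ_nonempty fun u =>
        (∑ i, r u i * π i) +
          ρ * ∑ y, VI P B r ρ k (bayesT (B u) (P u) π y) * obsMarg (B u) (P u) π y) = _
      rw [Finset.sup'_image _ _, Finset.sup'_product_left]
      apply Finset.sup'_congr Finset.univ_nonempty rfl
      intro u _
      have step1 : (∑ y, VI P B r ρ k (bayesT (B u) (P u) π y) * obsMarg (B u) (P u) π y)
          = ∑ y, Γ.sup' hΓ (fun γ => ∑ j, γ j * (B u j y * bayesPred (P u) π j)) :=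
        Finset.sum_congr rfl fun y _ => key u y
      rw [step1, sum_sup'_eq Γ hΓ, ← sup'_const_mul _ _ ρ hρ0, ← sup'_const_add]
      apply Finset.sup'_congr _ rfl
      intro f _
      show (∑ i, r u i * π i) + ρ * ∑ y, ∑ j, f y j * (B u j y * bayesPred (P u) π j)
          = ∑ i, (r u i + ρ * ∑ y, ∑ j, f y j * (B u j y * P u i j)) * π i
      have hswap : (∑ y, ∑ j, f y j * (B u j y * bayesPred (P u) π j))
          = ∑ i, (∑ y, ∑ j, f y j * (B u j y * P u i j)) * π i := by
        have e1 : ∀ y j, f y j * (B u j y * bayesPred (P u) π j)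
            = ∑ i, f y j * (B u j y * P u i j) * π i := by
          intro y j
          unfold bayesPred
          rw [Finset.mul_sum, Finset.mul_sum]
          exact Finset.sum_congr rfl fun i _ => by ring
        simp only [e1, Finset.sum_mul]
        calc (∑ y, ∑ j, ∑ i, f y j * (B u j y * P u i j) * π i)
            = ∑ y, ∑ i, ∑ j, f y j * (B u j y * P u i j) * π i :=
              Finset.sum_congr rfl fun y _ => Finset.sum_comm
          _ = ∑ i, ∑ y, ∑ j, f y j * (B u j y * P u i j) * π i :=
              Finset.sum_comm
      rw [hswap, Finset.mul_sum, ← Finset.sum_add_distrib]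
      apply Finset.sum_congr rfl
      intro i _
      ring
end

section
/- Boundary inequalities for Bayes updates under the absolute-continuity condition (Theorem 5, finite-observation form): Let P be an X×X row-stochastic TP2 matrix, and let B(u), B(u+1) be X×Y row-stochastic TP2 matrices satisfying the boundary condition (A7): for all i, B(u)_{i,1}·B(u+1)_{X,1} ≤ B(u+1)_{i,1}·B(u)_{X,1} and B(u)_{i,Y}·B(u+1)_{X,Y} ≥ B(u+1)_{i,Y}·B(u)_{X,Y}. Let π ∈ Π(X). If σ(π,1,u) > 0 and σ(π,1,u+1) > 0, then the last components of the Bayes updates at the smallest observation satisfy e_XᵀT(π,1,u+1) ≤ e_XᵀT(π,1,u); and if σ(π,Y,u) > 0 and σ(π,Y,u+1) > 0, then at the largest observation e_XᵀT(π,Y,u+1) ≥ e_XᵀT(π,Y,u). -/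
open Finset

/-- Theorem 5, finite-observation form: under TP2 assumptions and the boundary condition A7
for the pair `(B(u), B(u+1))`, the last component of the Bayes update satisfies
`e_XᵀT(π,1,u+1) ≤ e_XᵀT(π,1,u)` at the smallest observation and
`e_XᵀT(π,Y,u+1) ≥ e_XᵀT(π,Y,u)` at the largest observation. -/
theorem boundary_bayes_update_inequalities
    (X Y : ℕ) [NeZero X] [NeZero Y]
    (P : Matrix (Fin X) (Fin X) ℝ) (hP : rowStochastic P) (hPtp2 : TP2 P)
    (Bu Bu' : Matrix (Fin X) (Fin Y) ℝ)
    (hBu : rowStochastic Bu) (hBu' : rowStochastic Bu')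
    (hBuTP2 : TP2 Bu) (hBu'TP2 : TP2 Bu')
    (hA7 : BoundaryCond Bu Bu')
    (π : Fin X → ℝ) (hπ : inSimplex π) :
    (0 < obsMarg Bu P π 0 → 0 < obsMarg Bu' P π 0 →
      bayesT Bu' P π 0 (lastIdx X) ≤ bayesT Bu P π 0 (lastIdx X)) ∧
    (0 < obsMarg Bu P π (lastIdx Y) → 0 < obsMarg Bu' P π (lastIdx Y) →
      bayesT Bu P π (lastIdx Y) (lastIdx X) ≤ bayesT Bu' P π (lastIdx Y) (lastIdx X)) := by
  have pnn : ∀ j, 0 ≤ bayesPred P π j := fun j =>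
    Finset.sum_nonneg fun i _ => mul_nonneg (hP.1 i j) (hπ.1 i)
  constructor
  · intro hσ hσ'
    unfold bayesT
    rw [div_le_div_iff₀ hσ' hσ]
    unfold obsMarg
    rw [Finset.mul_sum, Finset.mul_sum]
    refine Finset.sum_le_sum fun j _ => ?_
    nlinarith [mul_le_mul_of_nonneg_right (hA7 j).1
      (mul_nonneg (pnn (lastIdx X)) (pnn j))]
  · intro hσ hσ'
    unfold bayesT
    rw [div_le_div_iff₀ hσ hσ']
    unfold obsMarg
    rw [Finset.mul_sum, Finset.mul_sum]
    refine Finset.sum_le_sum fun j _ => ?_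
    nlinarith [mul_le_mul_of_nonneg_right (hA7 j).2
      (mul_nonneg (pnn (lastIdx X)) (pnn j))]
end

section
/- Wedge decomposition of nonnegative increasing convex piecewise-linear functions (lemma underlying Theorem 4, statement 3): Let g : [0,1] → ℝ be convex, monotone nondecreasing, with g(0) ≥ 0, and piecewise linear, i.e., there exist points 0 = x_0 < x_1 < ... < x_m = 1 such that g is affine on each subinterval [x_{t−1}, x_t]. Then there exist n ∈ ℕ, nonnegative reals α_1,...,α_n, and reals f_1,...,f_n such that g(x) = Σ_{i=1}^{n} max(α_i·x − f_i, 0) for all x ∈ [0,1]. -/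
open Finset

/-- Wedge decomposition of nonnegative increasing convex piecewise-linear functions on [0,1]
(lemma underlying Theorem 4, statement 3): such a function is a finite sum of wedge functions
`x ↦ max(αᵢ x − fᵢ, 0)` with `αᵢ ≥ 0`. -/
theorem wedge_decomposition
    (g : ℝ → ℝ)
    (hconv : ConvexOn ℝ (Set.Icc (0 : ℝ) 1) g)
    (hmono : MonotoneOn g (Set.Icc (0 : ℝ) 1))
    (h0 : 0 ≤ g 0)
    (m : ℕ) (x : Fin (m + 1) → ℝ) (hxmono : StrictMono x)
    (hx0 : x 0 = 0) (hx1 : x (Fin.last m) = 1)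
    (hpl : ∀ t : Fin m, ∃ a b : ℝ,
      ∀ z ∈ Set.Icc (x t.castSucc) (x t.succ), g z = a * z + b) :
    ∃ n : ℕ, ∃ α f : Fin n → ℝ, (∀ i, 0 ≤ α i) ∧
      ∀ z ∈ Set.Icc (0 : ℝ) 1, g z = ∑ i, max (α i * z - f i) 0 := by
  choose a b hab using hpl
  have hxmem : ∀ t : Fin (m+1), x t ∈ Set.Icc (0:ℝ) 1 := fun t =>
    ⟨hx0 ▸ hxmono.monotone (Fin.zero_le t), hx1 ▸ hxmono.monotone (Fin.le_last t)⟩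
  -- natural-number indexed versions
  set xN : ℕ → ℝ := fun s => if h : s < m + 1 then x ⟨s, h⟩ else 0 with hxN
  set aN : ℕ → ℝ := fun s => if h : s < m then a ⟨s, h⟩ else 0 with haN
  set A : ℕ → ℝ := fun s => match s with | 0 => 0 | n+1 => aN n with hA
  have hxNval : ∀ s (h : s < m + 1), xN s = x ⟨s, h⟩ := fun s h => dif_pos h
  have haNval : ∀ s (h : s < m), aN s = a ⟨s, h⟩ := fun s h => dif_pos h
  have hxNmono : ∀ s s', s ≤ s' → s' < m + 1 → xN s ≤ xN s' := by
    intro s s' hss hs'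
    rw [hxNval s (Nat.lt_of_le_of_lt hss hs'), hxNval s' hs']
    exact hxmono.monotone (by simpa [Fin.le_def] using hss)
  have hxNlt : ∀ s, s + 1 < m + 1 → xN s < xN (s+1) := by
    intro s h
    rw [hxNval s (Nat.lt_of_succ_lt h), hxNval (s+1) h]
    exact hxmono (by simp [Fin.lt_def])
  -- the affine formula on each piece, ℕ-indexed
  have habN : ∀ s (h : s < m), ∀ z ∈ Set.Icc (xN s) (xN (s+1)),
      g z = aN s * z + b ⟨s, h⟩ := by
    intro s h z hz
    rw [haNval s h]
    have e1 : xN s = x (Fin.castSucc ⟨s, h⟩) := hxNval s (Nat.lt_succ_of_lt h)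
    have e2 : xN (s+1) = x (Fin.succ ⟨s, h⟩) := hxNval (s+1) (Nat.succ_lt_succ h)
    exact hab ⟨s, h⟩ z ⟨e1 ▸ hz.1, e2 ▸ hz.2⟩
  -- slope identity
  have hslope : ∀ s (h : s < m),
      g (xN (s+1)) - g (xN s) = aN s * (xN (s+1) - xN s) := by
    intro s h
    have h1 := habN s h (xN s) ⟨le_rfl, (hxNlt s (Nat.succ_lt_succ h)).le⟩
    have h2 := habN s h (xN (s+1)) ⟨(hxNlt s (Nat.succ_lt_succ h)).le, le_rfl⟩
    rw [h1, h2]; ring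
  -- slopes nonnegative
  have haNnonneg : ∀ s, s < m → 0 ≤ aN s := by
    intro s h
    have hlt := hxNlt s (Nat.succ_lt_succ h)
    have hmem1 : xN s ∈ Set.Icc (0:ℝ) 1 := hxNval s (Nat.lt_succ_of_lt h) ▸ hxmem _
    have hmem2 : xN (s+1) ∈ Set.Icc (0:ℝ) 1 := hxNval (s+1) (Nat.succ_lt_succ h) ▸ hxmem _
    have hg := hmono hmem1 hmem2 hlt.le
    have := hslope s h
    nlinarith
  -- slopes nondecreasing (convexity)
  have haNmono : ∀ s, s + 1 < m → aN s ≤ aN (s+1) := by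
    intro s h
    have h1 : s < m := Nat.lt_of_succ_lt h
    have l1 := hxNlt s (Nat.succ_lt_succ h1)
    have l2 := hxNlt (s+1) (Nat.succ_lt_succ h)
    have hmem1 : xN s ∈ Set.Icc (0:ℝ) 1 := hxNval s (Nat.lt_succ_of_lt h1) ▸ hxmem _
    have hmem3 : xN (s+2) ∈ Set.Icc (0:ℝ) 1 := hxNval (s+2) (Nat.succ_lt_succ h) ▸ hxmem _
    have key := hconv.slope_mono_adjacent hmem1 hmem3 l1 l2
    rw [hslope s h1, hslope (s+1) h] at key
    rw [mul_div_assoc, div_self (by linarith), mul_div_assoc, div_self (by linarith)] at key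
    simpa using key
  have hcnonneg : ∀ s, s < m → 0 ≤ A (s+1) - A s := by
    intro s h
    match s with
    | 0 => simpa [hA] using haNnonneg 0 h
    | n+1 =>
      have := haNmono n h
      simp only [hA]
      linarith
  -- main induction
  have key : ∀ t : ℕ, ∀ ht : t < m + 1, ∀ z ∈ Set.Icc (0:ℝ) (xN t),
      g z = g 0 + ∑ s ∈ Finset.range m, (A (s+1) - A s) * max (z - xN s) 0 := by
    intro t
    induction t with
    | zero =>
      intro ht z hz
      have hx00 : xN 0 = 0 := by rw [hxNval 0 ht]; exact hx0
      have hz0 : z = 0 := le_antisymm (hx00 ▸ hz.2) hz.1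
      subst hz0
      have hterms : ∀ s ∈ Finset.range m, (A (s+1) - A s) * max (0 - xN s) 0 = 0 := by
        intro s hs
        have : (0:ℝ) ≤ xN s := by
          rw [← hx00]; exact hxNmono 0 s (Nat.zero_le s) (Nat.lt_succ_of_lt (Finset.mem_range.mp hs))
        rw [max_eq_right (by linarith), mul_zero]
      rw [Finset.sum_congr rfl hterms, Finset.sum_const_zero, add_zero]
    | succ t ih =>
      intro ht z hz
      have htm : t < m := Nat.lt_of_succ_lt_succ ht
      by_cases hcase : z ≤ xN t
      · exact ih (Nat.lt_of_succ_lt ht) z ⟨hz.1, hcase⟩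
      push_neg at hcase
      have hgz := habN t htm z ⟨hcase.le, hz.2⟩
      have hgxt := habN t htm (xN t) ⟨le_rfl, (hxNlt t ht).le⟩
      have hxt0 : (0:ℝ) ≤ xN t := by
        have : xN 0 = 0 := by rw [hxNval 0 (Nat.succ_pos m)]; exact hx0
        rw [← this]; exact hxNmono 0 t (Nat.zero_le t) (Nat.lt_of_succ_lt ht)
      have ihxt := ih (Nat.lt_of_succ_lt ht) (xN t) ⟨hxt0, le_rfl⟩
      -- sum difference
      have hterm : ∀ s ∈ Finset.range m,
          (A (s+1) - A s) * max (z - xN s) 0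
          = (A (s+1) - A s) * max (xN t - xN s) 0
            + (if s < t + 1 then (A (s+1) - A s) * (z - xN t) else 0) := by
        intro s hs
        have hsm := Finset.mem_range.mp hs
        rcases lt_or_ge s (t+1) with h | h
        · have h1 : xN s ≤ xN t := hxNmono s t (Nat.lt_succ_iff.mp h) (Nat.lt_of_succ_lt ht)
          rw [max_eq_left (by linarith), max_eq_left (by linarith), if_pos h]
          ring
        · have h1 : xN (t+1) ≤ xN s := hxNmono (t+1) s h (Nat.lt_succ_of_lt hsm)
          have h2 : z ≤ xN s := le_trans hz.2 h1
          have h3 : xN t ≤ xN s := le_trans (hxNlt t ht).le h1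
          rw [max_eq_right (by linarith), max_eq_right (by linarith), if_neg (not_lt.mpr h)]
          ring
      have hif : ∑ s ∈ Finset.range m, (if s < t + 1 then (A (s+1) - A s) * (z - xN t) else 0)
          = aN t * (z - xN t) := by
        have h1 : ∑ s ∈ Finset.range m, (if s < t + 1 then (A (s+1) - A s) * (z - xN t) else 0)
            = ∑ s ∈ Finset.range (t+1), (A (s+1) - A s) * (z - xN t) := by
          rw [← Finset.sum_subset (Finset.range_subset_range.mpr htm)
              (fun s _ hns => if_neg (by simpa using hns))]
          exact Finset.sum_congr rfl (fun s hs => if_pos (Finset.mem_range.mp hs))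
        rw [h1, ← Finset.sum_mul, Finset.sum_range_sub A]
        simp [hA]
      rw [Finset.sum_congr rfl hterm, Finset.sum_add_distrib, hif]
      rw [hgz]
      rw [hgxt] at ihxt
      linarith
  -- assemble the decomposition
  refine ⟨m + 1, Fin.cons 0 (fun s : Fin m => A (s.val+1) - A s.val),
    Fin.cons (-(g 0)) (fun s : Fin m => (A (s.val+1) - A s.val) * xN s.val), ?_, ?_⟩
  · intro i
    refine Fin.cases ?_ ?_ i
    · simp
    · intro s
      simpa using hcnonneg s.val s.isLt
  · intro z hz
    have hzx : z ∈ Set.Icc (0:ℝ) (xN m) := by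
      have : xN m = 1 := by rw [hxNval m (Nat.lt_succ_self m)]; exact hx1
      rw [this]; exact hz
    rw [key m (Nat.lt_succ_self m) z hzx]
    rw [Fin.sum_univ_succ]
    simp only [Fin.cons_zero, Fin.cons_succ]
    congr 1
    · rw [max_eq_left (by simpa using h0)]; ring
    · rw [Finset.sum_range fun s => (A (s+1) - A s) * max (z - xN s) 0]
      refine Finset.sum_congr rfl ?_
      intro s _
      have hc := hcnonneg s.val s.isLt
      rw [mul_max_of_nonneg _ _ hc, mul_zero]
      ring_nf
end

section
/- First-order stochastic dominance of the observation marginals in the action (lemma used in the proofs of Theorems 1 and 2): Let P(1), P(2) be X×X row-stochastic matrices with strictly positive entries satisfying copositive dominance P(1) ⪯ P(2), and let B(1), B(2) be X×Y row-stochastic matrices such that B(1) is TP2 and (A5) holds: Σ_{y≥j} B(1)_{i,y} ≤ Σ_{y≥j} B(2)_{i,y} for all i ∈ {1,...,X} and j ∈ {1,...,Y}. Then for every belief π ∈ Π(X), the observation marginals σ_a(π,y) = Σ_i B(a)_{i,y}(P(a)ᵀπ)_i (a ∈ {1,2}) satisfy first-order stochastic dominance: Σ_{y≥l} σ_1(π,y)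 ≤ Σ_{y≥l} σ_2(π,y) for every l ∈ {1,...,Y}. -/
open Finset

lemma mlr_fosd {n : ℕ} (a b : Fin n → ℝ) (ha : ∀ i, 0 ≤ a i) (hb : ∀ i, 0 ≤ b i)
    (hsa : ∑ i, a i = 1) (hsb : ∑ i, b i = 1)
    (hmlr : ∀ i j : Fin n, i < j → a j * b i ≤ a i * b j) (l : Fin n) :
    ∑ y ∈ univ.filter (l ≤ ·), a y ≤ ∑ y ∈ univ.filter (l ≤ ·), b y := by
  have h1 : ∑ y ∈ univ.filter (l ≤ ·), a y + ∑ y ∈ univ.filter (fun y => ¬ l ≤ y), a y = 1 := by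
    rw [Finset.sum_filter_add_sum_filter_not]; exact hsa
  have h2 : ∑ y ∈ univ.filter (l ≤ ·), b y + ∑ y ∈ univ.filter (fun y => ¬ l ≤ y), b y = 1 := by
    rw [Finset.sum_filter_add_sum_filter_not]; exact hsb
  have hT1 : 0 ≤ ∑ y ∈ univ.filter (l ≤ ·), a y := Finset.sum_nonneg fun i _ => ha i
  have hT2 : 0 ≤ ∑ y ∈ univ.filter (l ≤ ·), b y := Finset.sum_nonneg fun i _ => hb i
  have key : (∑ y ∈ univ.filter (l ≤ ·), a y) * ∑ y ∈ univ.filter (fun y => ¬ l ≤ y), b y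
      ≤ (∑ y ∈ univ.filter (fun y => ¬ l ≤ y), a y) * ∑ y ∈ univ.filter (l ≤ ·), b y := by
    rw [Finset.sum_mul_sum, Finset.sum_mul_sum, Finset.sum_comm]
    refine Finset.sum_le_sum fun i hi => Finset.sum_le_sum fun j hj => ?_
    simp only [mem_filter, mem_univ, true_and] at hi hj
    exact hmlr i j (lt_of_lt_of_le (lt_of_not_ge hi) hj)
  nlinarith [key]

lemma abel_nonneg (n : ℕ) (F D : ℕ → ℝ) (hF : ∀ i, i + 1 < n → F i ≤ F (i + 1))
    (hsum : ∑ j ∈ range n, D j = 0)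
    (htail : ∀ k, k < n → 0 ≤ ∑ j ∈ Finset.Ico k n, D j) :
    0 ≤ ∑ j ∈ range n, F j * D j := by
  have hb := Finset.sum_range_by_parts F D n
  simp only [smul_eq_mul, hsum, mul_zero, zero_sub] at hb
  rw [hb, neg_nonneg]
  apply Finset.sum_nonpos
  intro i hi
  rw [Finset.mem_range] at hi
  have h1 : i + 1 < n := by omega
  have hmono : 0 ≤ F (i + 1) - F i := sub_nonneg.2 (hF i h1)
  have hpart : ∑ j ∈ range (i + 1), D j ≤ 0 := by
    have hsplit : ∑ j ∈ range (i + 1), D j + ∑ j ∈ Finset.Ico (i + 1) n, D j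
        = ∑ j ∈ range n, D j := by
      rw [Finset.range_eq_Ico, Finset.range_eq_Ico]
      exact Finset.sum_Ico_consecutive D (Nat.zero_le _) (le_of_lt h1)
    have ht := htail (i + 1) h1
    linarith [hsplit.trans hsum]
  exact mul_nonpos_of_nonneg_of_nonpos hmono hpart

lemma tail_conv {n : ℕ} (d : Fin n → ℝ) (k : ℕ) (hk : k < n) :
    ∑ j ∈ Finset.Ico k n, (if h : j < n then d ⟨j, h⟩ else 0) =
      ∑ y ∈ univ.filter ((⟨k, hk⟩ : Fin n) ≤ ·), d y := by
  rw [show Finset.Ico k n = (Finset.range n).filter (k ≤ ·) from by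
    ext x; simp only [Finset.mem_Ico, Finset.mem_filter, Finset.mem_range]; omega]
  rw [Finset.sum_filter, Finset.sum_filter,
    ← Fin.sum_univ_eq_sum_range (fun m => if k ≤ m then (if h : m < n then d ⟨m, h⟩ else 0) else 0) n]
  refine Finset.sum_congr rfl fun x _ => ?_
  simp [Fin.le_def, x.isLt]
/-- First-order stochastic dominance of the observation marginals in the action:
under copositive dominance `P(1) ⪯ P(2)`, TP2 of `B(1)` and the row dominance condition A5,
`σ₁(π,·) ≤_s σ₂(π,·)` for every belief `π`. -/
theorem obs_marginal_stochastic_dominance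
    (X Y : ℕ)
    (P1 P2 : Matrix (Fin X) (Fin X) ℝ)
    (hP1 : rowStochastic P1) (hP2 : rowStochastic P2)
    (hP1pos : ∀ i j, 0 < P1 i j) (hP2pos : ∀ i j, 0 < P2 i j)
    (hcop : CopositiveDom P1 P2)
    (B1 B2 : Matrix (Fin X) (Fin Y) ℝ)
    (hB1 : rowStochastic B1) (hB2 : rowStochastic B2)
    (hB1TP2 : TP2 B1)
    (hA5 : ∀ i : Fin X, ∀ j : Fin Y,
      ∑ y ∈ Finset.univ.filter (j ≤ ·), B1 i y ≤ ∑ y ∈ Finset.univ.filter (j ≤ ·), B2 i y) :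
    ∀ π : Fin X → ℝ, inSimplex π → ∀ l : Fin Y,
      ∑ y ∈ Finset.univ.filter (l ≤ ·), obsMarg B1 P1 π y ≤
        ∑ y ∈ Finset.univ.filter (l ≤ ·), obsMarg B2 P2 π y := by
  intro π hπ l
  obtain ⟨hπ0, hπ1⟩ := hπ
  have hex : ∃ i, 0 < π i := by
    by_contra h; push_neg at h
    have : ∑ i, π i ≤ 0 := Finset.sum_nonpos fun i _ => h i
    linarith
  obtain ⟨i0, hi0⟩ := hex
  have hq_pos : ∀ (P : Matrix (Fin X) (Fin X) ℝ), (∀ i j, 0 < P i j) →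
      ∀ j, 0 < bayesPred P π j := by
    intro P hP j
    have h1 : P i0 j * π i0 ≤ ∑ i, P i j * π i :=
      Finset.single_le_sum (fun i _ => mul_nonneg (le_of_lt (hP i j)) (hπ0 i)) (mem_univ i0)
    have h2 := mul_pos (hP i0 j) hi0
    unfold bayesPred; linarith
  have hq1pos : ∀ j, 0 < bayesPred P1 π j := hq_pos P1 hP1pos
  have hq2pos : ∀ j, 0 < bayesPred P2 π j := hq_pos P2 hP2pos
  have hqsum : ∀ (P : Matrix (Fin X) (Fin X) ℝ), rowStochastic P →
      ∑ j, bayesPred P π j = 1 := by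
    intro P hP
    unfold bayesPred
    calc ∑ j, ∑ i, P i j * π i = ∑ i, ∑ j, P i j * π i := Finset.sum_comm
    _ = ∑ i, (∑ j, P i j) * π i := by
        exact Finset.sum_congr rfl fun i _ => (Finset.sum_mul _ _ _).symm
    _ = 1 := by simp only [hP.2, one_mul]; exact hπ1
  -- adjacent MLR from copositive dominance
  have hadj : ∀ (j j' : Fin X), j'.val = j.val + 1 →
      bayesPred P1 π j' * bayesPred P2 π j ≤ bayesPred P1 π j * bayesPred P2 π j' := by
    intro j j' hjj'
    have h := hcop j j' hjj' π ⟨hπ0, hπ1⟩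
    have key : (∑ m, ∑ n, π m *
        ((1/2) * ((P1 m j * P2 n j' - P1 m j' * P2 n j) +
                  (P1 n j * P2 m j' - P1 n j' * P2 m j))) * π n)
        = bayesPred P1 π j * bayesPred P2 π j' - bayesPred P1 π j' * bayesPred P2 π j := by
      calc (∑ m, ∑ n, π m *
        ((1/2) * ((P1 m j * P2 n j' - P1 m j' * P2 n j) +
                  (P1 n j * P2 m j' - P1 n j' * P2 m j))) * π n)
          = ∑ m, ∑ n, ((1/2 : ℝ) * ((P1 m j * π m) * (P2 n j' * π n))
            - (1/2) * ((P1 m j' * π m) * (P2 n j * π n))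
            + ((1/2) * ((P2 m j' * π m) * (P1 n j * π n))
            - (1/2) * ((P2 m j * π m) * (P1 n j' * π n)))) := by
            exact Finset.sum_congr rfl fun m _ => Finset.sum_congr rfl fun n _ => by ring
        _ = bayesPred P1 π j * bayesPred P2 π j'
            - bayesPred P1 π j' * bayesPred P2 π j := by
            simp only [Finset.sum_add_distrib, Finset.sum_sub_distrib, ← Finset.mul_sum,
              ← Finset.sum_mul]
            rw [show bayesPred P1 π j = ∑ i, P1 i j * π i from rfl,
              show bayesPred P1 π j' = ∑ i, P1 i j' * π i from rfl,
              show bayesPred P2 π j = ∑ i, P2 i j * π i from rfl,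
              show bayesPred P2 π j' = ∑ i, P2 i j' * π i from rfl]
            ring
    rw [key] at h
    linarith
  -- full MLR by chaining with positivity
  have hfull : ∀ (i j : Fin X), i < j →
      bayesPred P1 π j * bayesPred P2 π i ≤ bayesPred P1 π i * bayesPred P2 π j := by
    have H : ∀ m : ℕ, ∀ i j : Fin X, j.val = i.val + m + 1 →
        bayesPred P1 π j * bayesPred P2 π i ≤ bayesPred P1 π i * bayesPred P2 π j := by
      intro m
      induction m with
      | zero => intro i j h; exact hadj i j (by omega)
      | succ m ih =>
        intro i j h
        have hlt : i.val + m + 1 < X := by omega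
        set jm : Fin X := ⟨i.val + m + 1, hlt⟩ with hjm
        have h1 := ih i jm rfl
        have h2 := hadj jm j (by simp [hjm]; omega)
        have hmul := mul_le_mul h2 h1
          (mul_nonneg (le_of_lt (hq1pos jm)) (le_of_lt (hq2pos i)))
          (mul_nonneg (le_of_lt (hq1pos jm)) (le_of_lt (hq2pos j)))
        have hpos : 0 < bayesPred P1 π jm * bayesPred P2 π jm :=
          mul_pos (hq1pos jm) (hq2pos jm)
        have hfin : (bayesPred P1 π j * bayesPred P2 π i) *
            (bayesPred P1 π jm * bayesPred P2 π jm) ≤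
            (bayesPred P1 π i * bayesPred P2 π j) *
            (bayesPred P1 π jm * bayesPred P2 π jm) := by nlinarith [hmul]
        exact le_of_mul_le_mul_right hfin hpos
    intro i j hij
    have hv : i.val < j.val := hij
    exact H (j.val - i.val - 1) i j (by omega)
  -- FOSD of predicted beliefs
  have hfosd : ∀ k : Fin X, ∑ j ∈ univ.filter (k ≤ ·), bayesPred P1 π j ≤
      ∑ j ∈ univ.filter (k ≤ ·), bayesPred P2 π j :=
    fun k => mlr_fosd _ _ (fun i => le_of_lt (hq1pos i)) (fun i => le_of_lt (hq2pos i))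
      (hqsum P1 hP1) (hqsum P2 hP2) hfull k
  -- monotone tails of B1 rows (TP2)
  have hf_mono : ∀ (i i' : Fin X), i < i' →
      ∑ y ∈ univ.filter (l ≤ ·), B1 i y ≤ ∑ y ∈ univ.filter (l ≤ ·), B1 i' y :=
    fun i i' hii' => mlr_fosd (B1 i) (B1 i') (fun y => hB1.1 i y) (fun y => hB1.1 i' y)
      (hB1.2 i) (hB1.2 i') (fun y y' hyy' => hB1TP2 i i' y y' hii' hyy') l
  -- swap sums
  have hswap : ∀ (B : Matrix (Fin X) (Fin Y) ℝ) (P : Matrix (Fin X) (Fin X) ℝ),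
      ∑ y ∈ univ.filter (l ≤ ·), obsMarg B P π y =
      ∑ j, (∑ y ∈ univ.filter (l ≤ ·), B j y) * bayesPred P π j := by
    intro B P
    unfold obsMarg
    rw [Finset.sum_comm]
    exact Finset.sum_congr rfl fun j _ => (Finset.sum_mul _ _ _).symm
  rw [hswap B1 P1, hswap B2 P2]
  have stepA5 : ∑ j, (∑ y ∈ univ.filter (l ≤ ·), B1 j y) * bayesPred P2 π j ≤
      ∑ j, (∑ y ∈ univ.filter (l ≤ ·), B2 j y) * bayesPred P2 π j :=
    Finset.sum_le_sum fun j _ => mul_le_mul_of_nonneg_right (hA5 j l) (le_of_lt (hq2pos j))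
  -- Abel step
  set D : ℕ → ℝ := fun m => if h : m < X then bayesPred P2 π ⟨m, h⟩ - bayesPred P1 π ⟨m, h⟩ else 0
    with hD
  set F : ℕ → ℝ := fun m => if h : m < X then ∑ y ∈ univ.filter (l ≤ ·), B1 ⟨m, h⟩ y else 0
    with hFdef
  have habel : 0 ≤ ∑ m ∈ Finset.range X, F m * D m := by
    apply abel_nonneg
    · intro i hi
      have hi0 : i < X := by omega
      simp only [hFdef, dif_pos hi, dif_pos hi0]
      exact hf_mono ⟨i, hi0⟩ ⟨i + 1, hi⟩ (Fin.mk_lt_mk.2 (by omega))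
    · rw [← Fin.sum_univ_eq_sum_range D X]
      have hDi : ∀ i : Fin X, D i.val = bayesPred P2 π i - bayesPred P1 π i := fun i => by
        simp [hD, i.isLt]
      rw [Finset.sum_congr rfl fun i _ => hDi i, Finset.sum_sub_distrib,
        hqsum P1 hP1, hqsum P2 hP2]
      ring
    · intro k hk
      have hconv := tail_conv (fun j => bayesPred P2 π j - bayesPred P1 π j) k hk
      have hDeq : ∑ j ∈ Finset.Ico k X, D j =
          ∑ y ∈ univ.filter ((⟨k, hk⟩ : Fin X) ≤ ·),
            (bayesPred P2 π y - bayesPred P1 π y) := by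
        rw [← hconv]
      rw [hDeq, Finset.sum_sub_distrib]
      have := hfosd ⟨k, hk⟩
      linarith
  have heq : ∑ m ∈ Finset.range X, F m * D m
      = ∑ j, (∑ y ∈ univ.filter (l ≤ ·), B1 j y) *
          (bayesPred P2 π j - bayesPred P1 π j) := by
    rw [← Fin.sum_univ_eq_sum_range (fun m => F m * D m) X]
    exact Finset.sum_congr rfl fun i _ => by simp [hFdef, hD, i.isLt]
  have hexp : ∑ j, (∑ y ∈ univ.filter (l ≤ ·), B1 j y) *
        (bayesPred P2 π j - bayesPred P1 π j)
      = (∑ j, (∑ y ∈ univ.filter (l ≤ ·), B1 j y) * bayesPred P2 π j)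
        - ∑ j, (∑ y ∈ univ.filter (l ≤ ·), B1 j y) * bayesPred P1 π j := by
    rw [← Finset.sum_sub_distrib]
    exact Finset.sum_congr rfl fun j _ => by ring
  have h0 : 0 ≤ (∑ j, (∑ y ∈ univ.filter (l ≤ ·), B1 j y) * bayesPred P2 π j)
      - ∑ j, (∑ y ∈ univ.filter (l ≤ ·), B1 j y) * bayesPred P1 π j := by
    rw [← hexp, ← heq]; exact habel
  linarith [stepA5]
end

section
/- TP2 matrices preserve the MLR order (Bayes-prediction monotonicity lemma used throughout): Let P be an X×X matrix with nonnegative entries that is TP2 (all 2×2 minors nonnegative), and let π₁, π₂ ∈ ℝ^X be vectors with nonnegative entries such that π₁ ≤_r π₂. Then Pᵀπ₁ ≤_r Pᵀπ₂, i.e., for all 1 ≤ i < j ≤ X: (Pᵀπ₁)_i (Pᵀπ₂)_j ≥ (Pᵀπ₁)_j (Pᵀπ₂)_i. Consequently, for any nonnegative diagonal scaling (such as a Bayes update with a fixed observation likelihood column b ∈ ℝ^X_{≥0}), the vectors with components b_m(Pᵀπ₁)_m and b_m(Pᵀπ₂)_m are also MLR ordered. -/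
open Finset

/-- TP2 matrices preserve the MLR order, and so does any nonnegative diagonal scaling
(Bayes-prediction monotonicity lemma): if `P` is TP2 with nonnegative entries and
`π₁ ≤_r π₂` (both with nonnegative entries), then `Pᵀπ₁ ≤_r Pᵀπ₂`, and for every
nonnegative likelihood column `b`, `(b ⊙ Pᵀπ₁) ≤_r (b ⊙ Pᵀπ₂)`. -/
theorem tp2_preserves_mlr
    (X : ℕ)
    (P : Matrix (Fin X) (Fin X) ℝ)
    (hPnonneg : ∀ i j, 0 ≤ P i j) (hPTP2 : TP2 P)
    (π₁ π₂ : Fin X → ℝ) (h₁ : ∀ i, 0 ≤ π₁ i) (h₂ : ∀ i, 0 ≤ π₂ i)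
    (hmlr : MLRle π₁ π₂) :
    MLRle (bayesPred P π₁) (bayesPred P π₂) ∧
    ∀ b : Fin X → ℝ, (∀ m, 0 ≤ b m) →
      MLRle (fun m => b m * bayesPred P π₁ m) (fun m => b m * bayesPred P π₂ m) := by
  have main : MLRle (bayesPred P π₁) (bayesPred P π₂) := by
    intro i j hij
    -- pointwise nonnegativity of symmetrized terms
    have key : ∀ k l : Fin X,
        0 ≤ π₁ k * π₂ l * (P k i * P l j - P k j * P l i)
           + π₁ l * π₂ k * (P l i * P k j - P l j * P k i) := by
      intro k l
      rcases lt_trichotomy k l with h | h | h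
      · have h1 := hmlr k l h
        have h2 := hPTP2 k l i j h hij
        nlinarith [mul_nonneg (sub_nonneg.2 h1) (sub_nonneg.2 h2)]
      · subst h
        have h0 : π₁ k * π₂ k * (P k i * P k j - P k j * P k i)
            + π₁ k * π₂ k * (P k i * P k j - P k j * P k i) = 0 := by ring
        linarith
      · have h1 := hmlr l k h
        have h2 := hPTP2 l k i j h hij
        nlinarith [mul_nonneg (sub_nonneg.2 h1) (sub_nonneg.2 h2)]
    have hsum : (0:ℝ) ≤ ∑ k, ∑ l, (π₁ k * π₂ l * (P k i * P l j - P k j * P l i)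
           + π₁ l * π₂ k * (P l i * P k j - P l j * P k i)) :=
      Finset.sum_nonneg fun k _ => Finset.sum_nonneg fun l _ => key k l
    have hswap : ∑ k : Fin X, ∑ l : Fin X, π₁ l * π₂ k * (P l i * P k j - P l j * P k i)
        = ∑ k : Fin X, ∑ l : Fin X, π₁ k * π₂ l * (P k i * P l j - P k j * P l i) := by
      rw [Finset.sum_comm]
    have hsplit : ∑ k : Fin X, ∑ l : Fin X, (π₁ k * π₂ l * (P k i * P l j - P k j * P l i)
           + π₁ l * π₂ k * (P l i * P k j - P l j * P k i))
        = 2 * ∑ k : Fin X, ∑ l : Fin X, π₁ k * π₂ l * (P k i * P l j - P k j * P l i) := by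
      simp only [Finset.sum_add_distrib]
      rw [hswap]; ring
    have hexp : ∑ k : Fin X, ∑ l : Fin X, π₁ k * π₂ l * (P k i * P l j - P k j * P l i)
        = bayesPred P π₁ i * bayesPred P π₂ j - bayesPred P π₁ j * bayesPred P π₂ i := by
      simp only [bayesPred, Finset.sum_mul_sum, ← Finset.sum_sub_distrib]
      exact Finset.sum_congr rfl fun k _ => Finset.sum_congr rfl fun l _ => by ring
    rw [hsplit, hexp] at hsum
    linarith
  refine ⟨main, fun b hb i j hij => ?_⟩
  have h1 := main i j hij
  have hp1 : 0 ≤ bayesPred P π₁ j :=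
    Finset.sum_nonneg fun k _ => mul_nonneg (hPnonneg k j) (h₁ k)
  have hp2 : 0 ≤ bayesPred P π₂ i :=
    Finset.sum_nonneg fun k _ => mul_nonneg (hPnonneg k i) (h₂ k)
  have hbi := hb i
  have hbj := hb j
  simp only
  nlinarith [mul_nonneg hbi hbj, mul_nonneg hp1 hp2]
end
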